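/- Let G be a finite simple graph (not a disjoint union of complete graphs). Then there exists a vertex v of G such that η(G − v) ≤ η(G) and η(G_v) < η(G). In other words, the invariant η is a compatible map: it satisfies η(Ĝ) ≤ η(G), η(⊔ K_{n_i}) ≥ t for a disjoint union of t complete graphs with all n_i ≥ 2, and the above vertex condition for graphs that are not disjoint unions of complete graphs. -/

import Mathlib

open SimpleGraph

variable {V : Type*}

/-- `H` is a clique disjoint edge set of `G`: a set of edges of `G` such that
no two distinct edges of `H` are contained in a common clique of `G`. -/
def CliqueDisjoint (G : SimpleGraph V) (H : Set (Sym2 V)) : Prop :=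
  H ⊆ G.edgeSet ∧ ∀ e ∈ H, ∀ f ∈ H, e ≠ f →
    ¬ ∃ K : Set V, G.IsClique K ∧ (∀ v ∈ e, v ∈ K) ∧ (∀ v ∈ f, v ∈ K)

/-- `eta G` is the maximum size of a clique disjoint edge set in `G`. -/
noncomputable def eta (G : SimpleGraph V) : ℕ :=
  sSup {n | ∃ H : Finset (Sym2 V), CliqueDisjoint G ↑H ∧ H.card = n}

/-- `Gv G v` is the graph obtained from `G` by adding all edges between neighbors of `v`. -/
def Gv (G : SimpleGraph V) (v : V) : SimpleGraph V :=
  G ⊔ SimpleGraph.fromRel (fun u w => G.Adj v u ∧ G.Adj v w)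

lemma cliqueDisjoint_empty (G : SimpleGraph V) : CliqueDisjoint G ↑(∅ : Finset (Sym2 V)) :=
  ⟨by simp, by simp⟩

lemma etaSet_nonempty (G : SimpleGraph V) :
    {n | ∃ H : Finset (Sym2 V), CliqueDisjoint G ↑H ∧ H.card = n}.Nonempty :=
  ⟨0, ∅, cliqueDisjoint_empty G, rfl⟩

lemma etaSet_bddAbove [Fintype V] (G : SimpleGraph V) :
    BddAbove {n | ∃ H : Finset (Sym2 V), CliqueDisjoint G ↑H ∧ H.card = n} := by
  classical
  refine ⟨Fintype.card (Sym2 V), ?_⟩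
  rintro n ⟨H, -, rfl⟩
  simpa using Finset.card_le_univ H

lemma card_le_eta [Fintype V] {G : SimpleGraph V} {H : Finset (Sym2 V)}
    (h : CliqueDisjoint G ↑H) : H.card ≤ eta G :=
  le_csSup (etaSet_bddAbove G) ⟨H, h, rfl⟩

lemma exists_eta [Fintype V] (G : SimpleGraph V) :
    ∃ H : Finset (Sym2 V), CliqueDisjoint G ↑H ∧ H.card = eta G :=
  Nat.sSup_mem (etaSet_nonempty G) (etaSet_bddAbove G)

lemma cliqueDisjoint_map_induce {s : Set V} (G : SimpleGraph V)
    (H : Finset (Sym2 s)) (hH : CliqueDisjoint (G.induce s) ↑H) :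
    CliqueDisjoint G ↑(H.map ⟨Sym2.map ((↑) : s → V), Sym2.map.injective Subtype.val_injective⟩) := by
  obtain ⟨hsub, hpair⟩ := hH
  constructor
  · intro e he
    simp only [Finset.coe_map, Set.mem_image, Finset.mem_coe, Function.Embedding.coeFn_mk] at he
    obtain ⟨e', he', rfl⟩ := he
    have := hsub he'
    induction e' using Sym2.ind with
    | _ x y =>
      rw [Sym2.map_pair_eq]
      rw [mem_edgeSet] at this ⊢
      exact this
  · intro e he f hf hef
    simp only [Finset.coe_map, Set.mem_image, Finset.mem_coe, Function.Embedding.coeFn_mk] at he hf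
    obtain ⟨e', he', rfl⟩ := he
    obtain ⟨f', hf', rfl⟩ := hf
    rintro ⟨K, hK, heK, hfK⟩
    have hne : e' ≠ f' := fun h => hef (by rw [h])
    refine hpair e' he' f' hf' hne ⟨Subtype.val ⁻¹' K, ?_, ?_, ?_⟩
    · intro x hx y hy hxy
      exact hK hx hy (fun h => hxy (Subtype.val_injective h))
    · intro x hx
      exact heK _ (Sym2.mem_map.mpr ⟨x, hx, rfl⟩)
    · intro x hx
      exact hfK _ (Sym2.mem_map.mpr ⟨x, hx, rfl⟩)

lemma gv_adj {G : SimpleGraph V} {v x y : V} :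
    (Gv G v).Adj x y ↔ G.Adj x y ∨ (x ≠ y ∧ G.Adj v x ∧ G.Adj v y) := by
  simp only [Gv, sup_adj, fromRel_adj]
  tauto

lemma gv_le {G : SimpleGraph V} {v : V} : G ≤ Gv G v := le_sup_left

lemma clique_gv_of_clique {G : SimpleGraph V} {v : V} {K : Set V} (hK : G.IsClique K) :
    (Gv G v).IsClique K := fun _ hx _ hy hxy => gv_le (hK hx hy hxy)

/-- The key construction: from a clique-disjoint set in `Gv G v`, get a strictly
larger one in `G`, provided `v` has two nonadjacent neighbors `a`, `b`. -/
lemma gv_key {G : SimpleGraph V} {v a b : V} (hva : G.Adj v a) (hvb : G.Adj v b)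
    (hab : a ≠ b) (hnab : ¬ G.Adj a b)
    (H : Finset (Sym2 V)) (hH : CliqueDisjoint (Gv G v) ↑H) :
    ∃ H' : Finset (Sym2 V), CliqueDisjoint G ↑H' ∧ H.card < H'.card := by
  classical
  obtain ⟨hsub, hpair⟩ := hH
  set P : Sym2 V → Prop := fun e => ∀ x ∈ e, x = v ∨ G.Adj v x with hP
  set S : Finset (Sym2 V) := H.filter P with hS
  -- the closed neighborhood of v is a clique in Gv
  have hKv : (Gv G v).IsClique {x | x = v ∨ G.Adj v x} := by
    rintro x (rfl | hx) y (rfl | hy) hxy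
    · exact absurd rfl hxy
    · exact gv_adj.mpr (Or.inl hy)
    · exact (gv_adj.mpr (Or.inl hx)).symm
    · exact gv_adj.mpr (Or.inr ⟨hxy, hx, hy⟩)
  -- S has at most one element
  have hScard : S.card ≤ 1 := by
    rw [Finset.card_le_one]
    intro e he f hf
    by_contra hef
    rw [hS, Finset.mem_filter] at he hf
    exact hpair e he.1 f hf.1 hef ⟨_, hKv, he.2, hf.2⟩
  -- edges of H not in S are G-edges
  have hGedge : ∀ e ∈ H, e ∉ S → e ∈ G.edgeSet := by
    intro e heH heS
    have he := hsub heH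
    induction e using Sym2.ind with
    | _ x y =>
      rw [mem_edgeSet] at he ⊢
      rcases gv_adj.mp he with h | ⟨-, hvx, hvy⟩
      · exact h
      · exact absurd (Finset.mem_filter.mpr ⟨heH, by
          intro z hz
          rcases Sym2.mem_iff.mp hz with rfl | rfl
          · exact Or.inr hvx
          · exact Or.inr hvy⟩) heS
  have hvaP : P s(v, a) := by
    intro z hz
    rcases Sym2.mem_iff.mp hz with rfl | rfl
    · exact Or.inl rfl
    · exact Or.inr hva
  have hvbP : P s(v, b) := by
    intro z hz
    rcases Sym2.mem_iff.mp hz with rfl | rfl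
    · exact Or.inl rfl
    · exact Or.inr hvb
  have hvaS : s(v, a) ∉ H \ S := by
    intro hmem
    rw [Finset.mem_sdiff] at hmem
    exact hmem.2 (Finset.mem_filter.mpr ⟨hmem.1, hvaP⟩)
  have hvbS : s(v, b) ∉ H \ S := by
    intro hmem
    rw [Finset.mem_sdiff] at hmem
    exact hmem.2 (Finset.mem_filter.mpr ⟨hmem.1, hvbP⟩)
  have hvavb : s(v, a) ≠ s(v, b) := by
    intro h
    rcases Sym2.eq_iff.mp h with ⟨-, h2⟩ | ⟨h1, h2⟩
    · exact hab h2
    · exact G.loopless.irrefl v (h2 ▸ hva)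
  refine ⟨insert s(v, a) (insert s(v, b) (H \ S)), ⟨?_, ?_⟩, ?_⟩
  · -- subset of edgeSet
    intro e he
    simp only [Finset.coe_insert, Set.mem_insert_iff, Finset.mem_coe] at he
    rcases he with rfl | rfl | he
    · exact hva
    · exact hvb
    · exact hGedge e (Finset.mem_sdiff.mp he).1 (Finset.mem_sdiff.mp he).2
  · -- pairwise no common clique
    have key : ∀ c : V, G.Adj v c → ∀ f ∈ H \ S,
        ¬ ∃ K : Set V, G.IsClique K ∧ (∀ x ∈ s(v, c), x ∈ K) ∧ (∀ x ∈ f, x ∈ K) := by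
      rintro c hvc f hf ⟨K, hK, heK, hfK⟩
      rw [Finset.mem_sdiff] at hf
      refine hf.2 (Finset.mem_filter.mpr ⟨hf.1, ?_⟩)
      intro z hz
      by_cases hzv : z = v
      · exact Or.inl hzv
      · exact Or.inr (hK (heK v (Sym2.mem_mk_left v c)) (hfK z hz) (Ne.symm hzv))
    have keyab : ¬ ∃ K : Set V, G.IsClique K ∧ (∀ x ∈ s(v, a), x ∈ K) ∧
        (∀ x ∈ s(v, b), x ∈ K) := by
      rintro ⟨K, hK, haK, hbK⟩
      exact hnab (hK (haK a (Sym2.mem_mk_right v a)) (hbK b (Sym2.mem_mk_right v b)) hab)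
    have keysym : ∀ {e f : Sym2 V},
        (¬ ∃ K : Set V, G.IsClique K ∧ (∀ x ∈ e, x ∈ K) ∧ (∀ x ∈ f, x ∈ K)) →
        ¬ ∃ K : Set V, G.IsClique K ∧ (∀ x ∈ f, x ∈ K) ∧ (∀ x ∈ e, x ∈ K) := by
      rintro e f h ⟨K, hK, h1, h2⟩
      exact h ⟨K, hK, h2, h1⟩
    intro e he f hf hef
    simp only [Finset.coe_insert, Set.mem_insert_iff, Finset.mem_coe] at he hf
    rcases he with rfl | rfl | he <;> rcases hf with rfl | rfl | hf
    · exact absurd rfl hef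
    · exact keyab
    · exact key a hva f hf
    · exact keysym keyab
    · exact absurd rfl hef
    · exact key b hvb f hf
    · exact keysym (key a hva e he)
    · exact keysym (key b hvb e he)
    · rintro ⟨K, hK, h1, h2⟩
      exact hpair e (Finset.mem_sdiff.mp he).1 f (Finset.mem_sdiff.mp hf).1 hef
        ⟨K, clique_gv_of_clique hK, h1, h2⟩
  · -- cardinality
    have h1 : s(v, b) ∉ (H \ S) := hvbS
    have h2 : s(v, a) ∉ insert s(v, b) (H \ S) := by
      simp only [Finset.mem_insert]
      rintro (h | h)
      · exact hvavb h
      · exact hvaS h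
    rw [Finset.card_insert_of_notMem h2, Finset.card_insert_of_notMem h1,
      Finset.card_sdiff_of_subset (Finset.filter_subset _ _)]
    have hSH : S.card ≤ H.card := Finset.card_le_card (Finset.filter_subset _ _)
    rw [← hS]
    omega

lemma exists_p3 (G : SimpleGraph V) {u w : V} (p : G.Walk u w)
    (hne : u ≠ w) (hnadj : ¬ G.Adj u w) :
    ∃ v a b : V, G.Adj v a ∧ G.Adj v b ∧ a ≠ b ∧ ¬ G.Adj a b := by
  induction p with
  | nil => exact absurd rfl hne
  | @cons u x w h q ih =>
    by_cases hxw : x = w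
    · exact absurd (hxw ▸ h) hnadj
    · by_cases hadj : G.Adj x w
      · exact ⟨x, u, w, h.symm, hadj, hne, hnadj⟩
      · exact ih hxw hadj

/-- If `G` is not a disjoint union of complete graphs, there is a vertex `v` with
`η(G - v) ≤ η(G)` and `η(G_v) < η(G)`; this is the key condition making `η` a
compatible map. -/
theorem eta_compatible_vertex [Fintype V] (G : SimpleGraph V)
    (h : ∃ u w : V, u ≠ w ∧ G.Reachable u w ∧ ¬ G.Adj u w) :
    ∃ v : V, eta (G.induce {u : V | u ≠ v}) ≤ eta G ∧ eta (Gv G v) < eta G := by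
  obtain ⟨u, w, hne, hreach, hnadj⟩ := h
  obtain ⟨p⟩ := hreach
  obtain ⟨v, a, b, hva, hvb, hab, hnab⟩ := exists_p3 G p hne hnadj
  refine ⟨v, ?_, ?_⟩
  · -- eta of vertex-deleted subgraph
    apply csSup_le (etaSet_nonempty _)
    rintro n ⟨H, hH, rfl⟩
    have := card_le_eta (cliqueDisjoint_map_induce G H hH)
    simpa [Finset.card_map] using this
  · -- eta of Gv strictly smaller
    obtain ⟨H, hH, hcard⟩ := exists_eta (Gv G v)
    obtain ⟨H', hH', hlt⟩ := gv_key hva hvb hab hnab H hH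
    rw [← hcard]
    exact lt_of_lt_of_le hlt (card_le_eta hH')
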